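/- arXiv:1309.5522 — 2 statements merged into one kernel-verified Lean document; each statement's English description precedes it below -/
import Mathlib

section
/- Let K be a maximal chunk of a history H whose forward zones form a chain with no three zones sharing a common point and no zone overlapping three others. If T is a viable total order over the dictating writes of the forward clusters of K, then T equals T_F or T_F', where T_F orders these writes by increasing low endpoint of their forward zones and T_F' is T_F with its first two elements swapped. -/
open scoped Classical

/-- An operation on a single register. -/
structure Op where
  s : ℝ
  f : ℝ
  isRead : Bool
  val : ℕ

abbrev History := Finset Op

def Op.isWrite (op : Op) : Prop := op.isRead = false

/-- Well-formedness of a history: operations have positive duration, all endpoints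
are distinct, writes have distinct values, and every read has a dictating write
that finishes before the read starts. -/
def Wf (H : History) : Prop :=
  (∀ op ∈ H, op.s < op.f) ∧
  (∀ op1 ∈ H, ∀ op2 ∈ H, op1 ≠ op2 →
    op1.s ≠ op2.s ∧ op1.f ≠ op2.f ∧ op1.s ≠ op2.f) ∧
  (∀ w1 ∈ H, ∀ w2 ∈ H, w1.isWrite → w2.isWrite → w1.val = w2.val → w1 = w2) ∧
  (∀ r ∈ H, r.isRead = true → ∃ w ∈ H, w.isWrite ∧ w.val = r.val ∧ w.f < r.s)

/-- `a` occurs before `b` in the total order represented by the list `l`. -/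
def Before (l : List Op) (a b : Op) : Prop :=
  ∃ l1 l2 l3, l = l1 ++ a :: l2 ++ b :: l3

/-- A total order (list) is valid if it respects real-time precedence. -/
def Valid (l : List Op) : Prop :=
  ∀ a ∈ l, ∀ b ∈ l, a.f < b.s → Before l a b

/-- `l` is a total order on exactly the operations of `H`. -/
def IsLinearization (H : History) (l : List Op) : Prop :=
  l.Nodup ∧ ∀ op, op ∈ l ↔ op ∈ H

/-- In the total order `l`, every read follows its dictating write, separated from
it by at most `k - 1` other writes. -/
def KAtomicOrder (k : ℕ) (l : List Op) : Prop :=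
  ∀ r ∈ l, r.isRead = true → ∀ w ∈ l, w.isWrite → w.val = r.val →
    ∃ l1 l2 l3, l = l1 ++ w :: l2 ++ r :: l3 ∧
      (l2.filter (fun op => op.isRead = false)).length ≤ k - 1

/-- A history is `k`-atomic if it has a valid `k`-atomic total order. -/
def KAtomic (k : ℕ) (H : History) : Prop :=
  ∃ l, IsLinearization H l ∧ Valid l ∧ KAtomicOrder k l

/-- The cluster of a write `w`: the write together with its dictated reads. -/
noncomputable def cluster (H : History) (w : Op) : Finset Op :=
  insert w (H.filter (fun r => r.isRead = true ∧ r.val = w.val))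

/-- Minimum finish time over the cluster of `w`. -/
noncomputable def fmin (H : History) (w : Op) : ℝ :=
  (cluster H w).inf' (Finset.insert_nonempty _ _) Op.f

/-- Maximum start time over the cluster of `w`. -/
noncomputable def smax (H : History) (w : Op) : ℝ :=
  (cluster H w).sup' (Finset.insert_nonempty _ _) Op.s

/-- The zone of `w`'s cluster is forward if its minimum finish time is less than
its maximum start time. -/
def ForwardZone (H : History) (w : Op) : Prop := fmin H w < smax H w

/-- Low endpoint of the zone of `w`'s cluster. -/
noncomputable def zoneL (H : History) (w : Op) : ℝ := min (fmin H w) (smax H w)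

/-- High endpoint of the zone of `w`'s cluster. -/
noncomputable def zoneH (H : History) (w : Op) : ℝ := max (fmin H w) (smax H w)

/-- The zone of `w`'s cluster, as a closed interval of time. -/
noncomputable def zone (H : History) (w : Op) : Set ℝ := Set.Icc (zoneL H w) (zoneH H w)

/-- Union of the forward zones of the clusters (identified by their dictating
writes) in `K`. -/
def fwdUnion (H : History) (K : Finset Op) : Set ℝ :=
  ⋃ w ∈ {w ∈ (K : Set Op) | ForwardZone H w}, zone H w

/-- Union of the backward zones of the clusters in `K`. -/
def bwdUnion (H : History) (K : Finset Op) : Set ℝ :=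
  ⋃ w ∈ {w ∈ (K : Set Op) | ¬ ForwardZone H w}, zone H w

/-- A chunk: a set of clusters (identified by their dictating writes) whose
forward zones union to a continuous nonempty time interval containing the
union of the chunk's backward zones. -/
def IsChunk (H : History) (K : Finset Op) : Prop :=
  (∀ w ∈ K, w ∈ H ∧ w.isWrite) ∧
  (fwdUnion H K).Nonempty ∧ (fwdUnion H K).OrdConnected ∧
  bwdUnion H K ⊆ fwdUnion H K

/-- A maximal chunk: no further cluster can be added while remaining a chunk. -/
def MaximalChunk (H : History) (K : Finset Op) : Prop :=
  IsChunk H K ∧ ∀ w ∈ H, w.isWrite → w ∉ K → ¬ IsChunk H (insert w K)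

/-- A chunk set of `H`: a set of maximal chunks covering every forward cluster. -/
def ChunkSet (H : History) (CS : Finset (Finset Op)) : Prop :=
  (∀ K ∈ CS, MaximalChunk H K) ∧
  ∀ w ∈ H, w.isWrite → ForwardZone H w → ∃ K ∈ CS, w ∈ K

/-- The projection `H|K` of `H` onto the chunk `K`: all operations of clusters in `K`. -/
noncomputable def proj (H : History) (K : Finset Op) : History :=
  H.filter (fun op => ∃ w ∈ K, op ∈ cluster H w)

/-- A total order `T` on a set of writes is viable if it extends to a valid total
order `T'` on those writes together with all their dictated reads in `H`, in which
every read follows its dictating write with at most one other write in between. -/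
def Viable (H : History) (T : List Op) : Prop :=
  ∃ T' : List Op, T'.Nodup ∧
    (∀ op, op ∈ T' ↔ op ∈ T ∨ (op ∈ H ∧ op.isRead = true ∧ ∃ w ∈ T, w.val = op.val)) ∧
    Valid T' ∧ T'.filter (fun op => op.isRead = false) = T ∧ KAtomicOrder 2 T'

/-- `T` is a valid total order on exactly the writes in `K`. -/
def TotalOrderOn (K : Finset Op) (T : List Op) : Prop :=
  T.Nodup ∧ (∀ w, w ∈ T ↔ w ∈ K) ∧ Valid T

/-- Swap the first two elements of a list. -/
def swapFirstTwo : List Op → List Op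
  | a :: b :: t => b :: a :: t
  | l => l

section Helpers
open List

noncomputable instance : DecidableEq Op := Classical.decEq _

lemma before_of_lt_idx {l : List Op} {a b : Op} (hb : b ∈ l)
    (h : l.idxOf a < l.idxOf b) : Before l a b := by
  induction l with
  | nil => simp at hb
  | cons x t ih =>
    by_cases hax : a = x
    · subst hax
      have hbx : b ≠ a := by
        rintro rfl; simp [List.idxOf_cons_self] at h
      have hbt : b ∈ t := by
        rcases List.mem_cons.mp hb with h1 | h1
        · exact absurd h1 hbx
        · exact h1
      obtain ⟨s, t', rfl⟩ := List.append_of_mem hbt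
      exact ⟨[], s, t', by simp⟩
    · have hbx : b ≠ x := by
        rintro rfl
        rw [List.idxOf_cons_self] at h; omega
      rw [List.idxOf_cons_ne _ (fun hh => hax hh.symm),
        List.idxOf_cons_ne _ (fun hh => hbx hh.symm)] at h
      have hbt : b ∈ t := by
        rcases List.mem_cons.mp hb with h1 | h1
        · exact absurd h1 hbx
        · exact h1
      obtain ⟨l1, l2, l3, rfl⟩ := ih hbt (Nat.succ_lt_succ_iff.mp h)
      exact ⟨x :: l1, l2, l3, by simp⟩

lemma idx_decomp {l l1 l2 : List Op} {a : Op} (hnd : l.Nodup) (h : l = l1 ++ a :: l2) :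
    l.idxOf a = l1.length := by
  subst h
  have : a ∉ l1 := by
    have := List.disjoint_of_nodup_append hnd
    intro hmem
    exact this hmem List.mem_cons_self
  rw [List.idxOf_append_of_notMem this]
  simp

lemma idx_lt_of_before {l : List Op} {a b : Op} (hnd : l.Nodup) (h : Before l a b) :
    l.idxOf a < l.idxOf b := by
  obtain ⟨l1, l2, l3, rfl⟩ := h
  have h1 : (l1 ++ a :: l2 ++ b :: l3).idxOf a = l1.length :=
    idx_decomp (l1 := l1) (l2 := l2 ++ b :: l3) hnd (by simp)
  have h2 : (l1 ++ a :: l2 ++ b :: l3).idxOf b = (l1 ++ a :: l2).length :=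
    idx_decomp (l1 := l1 ++ a :: l2) (l2 := l3) hnd (by simp)
  rw [h1, h2]
  simp only [List.length_append, List.length_cons]
  omega

lemma mem_of_before_left {l : List Op} {a b : Op} (h : Before l a b) : a ∈ l := by
  obtain ⟨l1, l2, l3, rfl⟩ := h; simp

lemma mem_of_before_right {l : List Op} {a b : Op} (h : Before l a b) : b ∈ l := by
  obtain ⟨l1, l2, l3, rfl⟩ := h; simp

lemma pair_sublist_before {a b : Op} : ∀ {l : List Op}, [a, b] <+ l → Before l a b := by
  intro l h
  induction l with
  | nil => simp at h
  | cons x t ih =>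
    cases h with
    | cons _ h' =>
      obtain ⟨l1, l2, l3, rfl⟩ := ih h'
      exact ⟨x :: l1, l2, l3, by simp⟩
    | cons_cons _ h' =>
      have hb : b ∈ t := h'.subset (by simp)
      obtain ⟨s, t', rfl⟩ := List.append_of_mem hb
      exact ⟨[], s, t', by simp⟩

lemma before_pair_sublist {l : List Op} {a b : Op} (h : Before l a b) : [a, b] <+ l := by
  obtain ⟨l1, l2, l3, rfl⟩ := h
  have h1 : [b] <+ l2 ++ b :: l3 :=
    List.Sublist.trans (List.Sublist.cons₂ b (List.nil_sublist l3))
      (List.sublist_append_right l2 _)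
  have h2 : [a, b] <+ a :: (l2 ++ b :: l3) := List.Sublist.cons₂ a h1
  have h3 := List.Sublist.trans h2 (List.sublist_append_right l1 _)
  simpa using h3

lemma before_of_sublist {s l : List Op} {a b : Op} (hsl : s.Sublist l)
    (h : Before s a b) : Before l a b :=
  pair_sublist_before ((before_pair_sublist h).trans hsl)

lemma before_trans {l : List Op} {a b c : Op} (hnd : l.Nodup)
    (h1 : Before l a b) (h2 : Before l b c) : Before l a c :=
  before_of_lt_idx (mem_of_before_right h2)
    ((idx_lt_of_before hnd h1).trans (idx_lt_of_before hnd h2))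

lemma mem_middle {l' l1 l2 l3 : List Op} {a ρ b : Op} (hnd : l'.Nodup)
    (hdec : l' = l1 ++ a :: l2 ++ ρ :: l3)
    (h1 : Before l' a b) (h2 : Before l' b ρ) : b ∈ l2 := by
  have hbl : b ∈ l' := mem_of_before_right h1
  have hia : l'.idxOf a < l'.idxOf b := idx_lt_of_before hnd h1
  have hib : l'.idxOf b < l'.idxOf ρ := idx_lt_of_before hnd h2
  rw [hdec] at hbl
  simp only [List.mem_append, List.mem_cons] at hbl
  rcases hbl with (hb1 | hba | hb2) | hbr | hb3
  · exfalso
    obtain ⟨s, t, rfl⟩ := List.append_of_mem hb1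
    have : Before l' b a := ⟨s, t, l2 ++ ρ :: l3, by rw [hdec]; simp⟩
    have := idx_lt_of_before hnd this
    omega
  · rw [hba] at hia; omega
  · exact hb2
  · rw [hbr] at hib; omega
  · exfalso
    obtain ⟨s, t, rfl⟩ := List.append_of_mem hb3
    have : Before l' ρ b := ⟨l1 ++ a :: l2, s, t, by rw [hdec]; simp⟩
    have := idx_lt_of_before hnd this
    omega

lemma two_le_length {l : List Op} {x y : Op} (hx : x ∈ l) (hy : y ∈ l) (hxy : x ≠ y) :
    2 ≤ l.length := by
  match l with
  | [] => simp at hx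
  | [z] =>
    simp only [List.mem_singleton] at hx hy
    exact absurd (hx.trans hy.symm) hxy
  | z :: w :: t =>
    simp only [List.length_cons]
    omega

lemma mem_cluster_self (H : History) (w : Op) : w ∈ cluster H w :=
  Finset.mem_insert_self _ _

lemma fmin_eq_f {H : History} (hWf : Wf H) {w : Op} (hw : w ∈ H) (hwr : w.isWrite) :
    fmin H w = w.f := by
  apply _root_.le_antisymm
  · exact Finset.inf'_le _ (mem_cluster_self H w)
  · apply Finset.le_inf'
    intro op hop
    rcases Finset.mem_insert.mp hop with rfl | hop
    · exact le_refl _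
    · obtain ⟨hopH, hread, hval⟩ := Finset.mem_filter.mp hop
      obtain ⟨w', hw'H, hw'w, hw'val, hw'f⟩ := hWf.2.2.2 op hopH hread
      have hww' : w' = w := hWf.2.2.1 w' hw'H w hw hw'w hwr (hw'val.trans hval)
      subst hww'
      exact le_of_lt (lt_trans hw'f (hWf.1 op hopH))

lemma exists_smax_read {H : History} (hWf : Wf H) {w : Op} (hw : w ∈ H)
    (hwr : w.isWrite) (hfz : ForwardZone H w) :
    ∃ ρ ∈ H, ρ.isRead = true ∧ ρ.val = w.val ∧ ρ.s = smax H w := by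
  obtain ⟨b, hb, hbs⟩ :=
    Finset.exists_mem_eq_sup' (s := cluster H w) ⟨w, mem_cluster_self H w⟩ Op.s
  have hbs : smax H w = b.s := hbs
  rcases Finset.mem_insert.mp hb with hbw | hb
  · exfalso
    have h1 : fmin H w < smax H w := hfz
    rw [fmin_eq_f hWf hw hwr, hbs, hbw] at h1
    exact absurd (lt_trans h1 (hWf.1 w hw)) (lt_irrefl _)
  · obtain ⟨hbH, hbr, hbval⟩ := Finset.mem_filter.mp hb
    exact ⟨b, hbH, hbr, hbval, hbs.symm⟩

lemma zone_forward_eq {H : History} {w : Op} (hfz : ForwardZone H w) :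
    zone H w = Set.Icc (fmin H w) (smax H w) := by
  unfold zone zoneL zoneH
  rw [min_eq_left (le_of_lt hfz), max_eq_right (le_of_lt hfz)]


lemma key_lemma {H : History} (hWf : Wf H) {K : Finset Op}
    (hKops : ∀ w ∈ K, w ∈ H ∧ w.isWrite)
    {T : List Op} (hTnd : T.Nodup) (hTmem : ∀ w, w ∈ T ↔ w ∈ K ∧ ForwardZone H w)
    (hTviable : Viable H T) {a b : Op} (ha : a ∈ T) (hb : b ∈ T) (hab : a ≠ b)
    (hlt : b.f < smax H a) : T.idxOf b ≤ T.idxOf a + 1 := by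
  obtain ⟨T', hT'nd, hT'mem, hT'valid, hT'filter, hT'2⟩ := hTviable
  have haK := (hTmem a).mp ha
  obtain ⟨haH, hawr⟩ := hKops a haK.1
  obtain ⟨ρ, hρH, hρr, hρval, hρs⟩ := exists_smax_read hWf haH hawr haK.2
  have hρT' : ρ ∈ T' := (hT'mem ρ).mpr (Or.inr ⟨hρH, hρr, a, ha, hρval.symm⟩)
  have haT' : a ∈ T' := (hT'mem a).mpr (Or.inl ha)
  have hbT' : b ∈ T' := (hT'mem b).mpr (Or.inl hb)
  obtain ⟨l1, l2, l3, hdec, hlen⟩ := hT'2 ρ hρT' hρr a haT' hawr hρval.symm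
  by_contra hcon
  push_neg at hcon
  have hidxb : T.idxOf b < T.length := List.idxOf_lt_length_iff.mpr hb
  have hidxa : T.idxOf a < T.length := List.idxOf_lt_length_iff.mpr ha
  have hclt : T.idxOf a + 1 < T.length := by omega
  set c := T[T.idxOf a + 1] with hcdef
  have hcT : c ∈ T := List.getElem_mem hclt
  have hidxc : T.idxOf c = T.idxOf a + 1 := List.Nodup.idxOf_getElem hTnd _ hclt
  have hcK := (hTmem c).mp hcT
  obtain ⟨hcH, hcwr⟩ := hKops c hcK.1
  have hbK := (hTmem b).mp hb
  obtain ⟨hbH, hbwr⟩ := hKops b hbK.1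
  have hsub : T.Sublist T' := by
    rw [← hT'filter]; exact List.filter_sublist
  have hT'ab : Before T' a b :=
    before_of_sublist hsub (before_of_lt_idx hb (by omega))
  have hT'ac : Before T' a c :=
    before_of_sublist hsub (before_of_lt_idx hcT (by omega))
  have hT'cb : Before T' c b :=
    before_of_sublist hsub (before_of_lt_idx hb (by omega))
  have hbρ : Before T' b ρ := by
    apply hT'valid b hbT' ρ hρT'
    rw [hρs]; exact hlt
  have hcρ : Before T' c ρ := before_trans hT'nd hT'cb hbρ
  have hbl2 : b ∈ l2 := mem_middle hT'nd hdec hT'ab hbρ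
  have hcl2 : c ∈ l2 := mem_middle hT'nd hdec hT'ac hcρ
  have hbf : b ∈ l2.filter (fun op => op.isRead = false) := by
    rw [List.mem_filter]
    exact ⟨hbl2, by simpa [Op.isWrite] using hbwr⟩
  have hcf : c ∈ l2.filter (fun op => op.isRead = false) := by
    rw [List.mem_filter]
    exact ⟨hcl2, by simpa [Op.isWrite] using hcwr⟩
  have hcb : b ≠ c := by
    intro h
    rw [h, hidxc] at hcon
    omega
  have h2 := two_le_length hbf hcf hcb
  rw [show (2:ℕ) - 1 = 1 from rfl] at hlen
  omega


end Helpers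

lemma perm_arith (n : ℕ) (p : ℕ → ℕ)
    (hinj : ∀ i < n, ∀ j < n, p i = p j → i = j)
    (hsurj : ∀ v < n, ∃ i, i < n ∧ p i = v)
    (hA : ∀ j i, j < i → i < n → p j ≤ p i + 1)
    (hB : 1 < n → p 1 ≤ p 0 + 1)
    (hC : ∀ i, 2 ≤ i → i + 1 < n → p (i + 1) ≤ p i + 1)
    (hD : 2 < n → p 2 ≤ p 1 + 1 ∨ p 2 ≤ p 0 + 1) :
    (∀ i < n, p i = i) ∨
      (1 < n ∧ p 0 = 1 ∧ p 1 = 0 ∧ ∀ i, 2 ≤ i → i < n → p i = i) := by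
  rcases Nat.lt_or_ge n 2 with hn | hn
  · left
    intro i hi
    have h0 : i = 0 := by omega
    subst h0
    obtain ⟨j, hj, hpj⟩ := hsurj 0 (by omega)
    have hj0 : j = 0 := by omega
    rw [hj0] at hpj
    omega
  · -- n ≥ 2
    have h0 : p 0 ≤ 1 := by
      by_contra hcon
      obtain ⟨i0, hi0, hpi0⟩ := hsurj 0 (by omega)
      have hi0ne : i0 ≠ 0 := by
        intro h; rw [h] at hpi0; omega
      have := hA 0 i0 (by omega) hi0
      omega
    have h1 : p 1 ≤ 1 := by
      by_contra hcon
      obtain ⟨i0, hi0, hpi0⟩ := hsurj 0 (by omega)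
      have hi0ne : i0 ≠ 1 := by
        intro h; rw [h] at hpi0; omega
      rcases Nat.eq_zero_or_pos i0 with h' | h'
      · rw [h'] at hpi0
        have := hB (by omega)
        omega
      · have := hA 1 i0 (by omega) hi0
        omega
    have hne : p 0 ≠ p 1 := by
      intro h
      have := hinj 0 (by omega) 1 (by omega) h
      omega
    -- strong induction part: for i ≥ 2 with p 2 = 2 base handled inside
    have hind : ∀ i, 2 ≤ i → i < n → p 2 = 2 → p i = i := by
      intro i
      induction i using Nat.strong_induction_on with
      | _ i ih =>
        intro h2i hin hp2
        match i, h2i with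
        | 2, _ => exact hp2
        | (k+3), _ =>
          have hk2 : p (k + 2) = k + 2 := ih (k + 2) (by omega) (by omega) (by omega) hp2
          have hub : p (k + 3) ≤ k + 3 := by
            have h' := hC (k + 2) (by omega) (by omega)
            have h'' : k + 2 + 1 = k + 3 := rfl
            rw [h''] at h'
            omega
          by_cases hv : p (k + 3) = k + 3
          · exact hv
          · exfalso
            have hvlt : p (k + 3) < k + 3 := by omega
            rcases Nat.lt_or_ge (p (k + 3)) 2 with hsm | hsm
            · -- p (k+3) ∈ {0, 1} = {p 0, p 1}
              have e0 : p (k + 3) = p 0 ∨ p (k + 3) = p 1 := by omega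
              rcases e0 with e | e
              · have := hinj (k + 3) hin 0 (by omega) e; omega
              · have := hinj (k + 3) hin 1 (by omega) e; omega
            · have := ih (p (k + 3)) (by omega) hsm (by omega) hp2
              have := hinj (k + 3) hin (p (k + 3)) (by omega) this.symm
              omega
    rcases (show (p 0 = 0 ∧ p 1 = 1) ∨ (p 0 = 1 ∧ p 1 = 0) by omega) with ⟨e0, e1⟩ | ⟨e0, e1⟩
    · left
      have hp2 : 2 < n → p 2 = 2 := by
        intro h2n
        have hub : p 2 ≤ 2 := by
          rcases hD h2n with h | h <;> omega
        have ne0 : p 2 ≠ p 0 := by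
          intro h; have := hinj 2 (by omega) 0 (by omega) h; omega
        have ne1 : p 2 ≠ p 1 := by
          intro h; have := hinj 2 (by omega) 1 (by omega) h; omega
        omega
      intro i hi
      match i with
      | 0 => exact e0
      | 1 => exact e1
      | (k+2) => exact hind (k + 2) (by omega) hi (hp2 (by omega))
    · right
      refine ⟨by omega, e0, e1, ?_⟩
      intro i h2i hin
      have hp2 : p 2 = 2 := by
        have h2n : 2 < n := by omega
        rcases hD h2n with h | h
        · exfalso
          have hub : p 2 ≤ 1 := by omega
          have e0' : p 2 = p 0 ∨ p 2 = p 1 := by omega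
          rcases e0' with e | e
          · have := hinj 2 (by omega) 0 (by omega) e; omega
          · have := hinj 2 (by omega) 1 (by omega) e; omega
        · have hub : p 2 ≤ 2 := by omega
          have ne0 : p 2 ≠ p 0 := by
            intro hh; have := hinj 2 (by omega) 0 (by omega) hh; omega
          have ne1 : p 2 ≠ p 1 := by
            intro hh; have := hinj 2 (by omega) 1 (by omega) hh; omega
          omega
      exact hind i h2i hin hp2

/-- If the forward zones of a maximal chunk `K` form a chain (no three zones share
a common point, no zone overlaps three others), then any viable total order `T`
over the dictating writes of the forward clusters of `K` equals `T_F` (writes in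
increasing order of low endpoint of their forward zones) or `T_F'` (`T_F` with the
first two elements swapped). -/
theorem stmt_5 (H : History) (hWf : Wf H) (K : Finset Op) (hK : MaximalChunk H K)
    (hNoTriple : ∀ w1 ∈ K, ∀ w2 ∈ K, ∀ w3 ∈ K, w1 ≠ w2 → w1 ≠ w3 → w2 ≠ w3 →
      ForwardZone H w1 → ForwardZone H w2 → ForwardZone H w3 →
      ¬ ∃ t : ℝ, t ∈ zone H w1 ∧ t ∈ zone H w2 ∧ t ∈ zone H w3)
    (hNoFour : ∀ w ∈ K, ForwardZone H w →
      ¬ ∃ w1 ∈ K, ∃ w2 ∈ K, ∃ w3 ∈ K, w1 ≠ w2 ∧ w1 ≠ w3 ∧ w2 ≠ w3 ∧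
        w1 ≠ w ∧ w2 ≠ w ∧ w3 ≠ w ∧
        ForwardZone H w1 ∧ ForwardZone H w2 ∧ ForwardZone H w3 ∧
        (zone H w ∩ zone H w1).Nonempty ∧ (zone H w ∩ zone H w2).Nonempty ∧
        (zone H w ∩ zone H w3).Nonempty)
    (TF : List Op) (hTFnd : TF.Nodup)
    (hTFmem : ∀ w, w ∈ TF ↔ w ∈ K ∧ ForwardZone H w)
    (hTFsorted : TF.Pairwise (fun a b => fmin H a < fmin H b))
    (T : List Op) (hTnd : T.Nodup)
    (hTmem : ∀ w, w ∈ T ↔ w ∈ K ∧ ForwardZone H w)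
    (hTvalid : Valid T) (hTviable : Viable H T) :
    T = TF ∨ T = swapFirstTwo TF := by
  classical
  obtain ⟨⟨hKops, hfwdNe, hfwdConn, _⟩, _⟩ := hK
  set n := TF.length with hn
  have hTFin : T.toFinset = TF.toFinset := by
    ext x
    simp only [List.mem_toFinset, hTmem, hTFmem]
  have hlenTT : T.length = n := by
    rw [← List.toFinset_card_of_nodup hTnd, hTFin, List.toFinset_card_of_nodup hTFnd]
  set dOp : Op := ⟨0, 0, false, 0⟩ with hdOp
  set u : ℕ → Op := fun i => TF.getD i dOp with hu
  have hu_eq : ∀ i (hi : i < n), u i = TF[i]'(by omega) := fun i h => List.getD_eq_getElem TF dOp (by omega)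
  have huTF : ∀ i, i < n → u i ∈ TF := by
    intro i h; rw [hu_eq i h]; exact List.getElem_mem h
  have huK : ∀ i, i < n → u i ∈ K ∧ ForwardZone H (u i) := by
    intro i h; exact (hTFmem _).mp (huTF i h)
  have huT : ∀ i, i < n → u i ∈ T := by
    intro i h; exact (hTmem _).mpr (huK i h)
  have huH : ∀ i, i < n → u i ∈ H ∧ (u i).isWrite := by
    intro i h; exact hKops _ (huK i h).1
  have hfeq : ∀ i, i < n → fmin H (u i) = (u i).f := by
    intro i h; exact fmin_eq_f hWf (huH i h).1 (huH i h).2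
  have hfs : ∀ i, i < n → (u i).f < smax H (u i) := by
    intro i h
    have := (huK i h).2
    rwa [ForwardZone, hfeq i h] at this
  have hmono : ∀ i j, i < j → j < n → (u i).f < (u j).f := by
    intro i j hij hj
    have hi : i < n := by omega
    have h1 := hTFsorted.rel_get_of_lt (a := ⟨i, hi⟩) (b := ⟨j, hj⟩) hij
    simp only [List.get_eq_getElem] at h1
    rw [← hu_eq i hi, ← hu_eq j hj] at h1
    rwa [hfeq i hi, hfeq j hj] at h1
  have hmonole : ∀ i j, i ≤ j → j < n → (u i).f ≤ (u j).f := by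
    intro i j hij hj
    rcases Nat.eq_or_lt_of_le hij with h | h
    · rw [h]
    · exact le_of_lt (hmono i j h hj)
  have hneq : ∀ i j, i < n → j < n → i ≠ j → u i ≠ u j := by
    intro i j hi hj hij h
    rw [hu_eq i hi, hu_eq j hj] at h
    exact hij ((hTFnd.getElem_inj_iff).mp h)
  have hzone : ∀ i, i < n → zone H (u i) = Set.Icc (u i).f (smax H (u i)) := by
    intro i h
    rw [zone_forward_eq (huK i h).2, hfeq i h]
  have hfwdmem : ∀ t : ℝ, t ∈ fwdUnion H K ↔ ∃ i, i < n ∧ t ∈ zone H (u i) := by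
    intro t
    unfold fwdUnion
    simp only [Set.mem_iUnion, Set.mem_setOf_eq, Finset.mem_coe, exists_prop]
    constructor
    · rintro ⟨w, ⟨hwK, hwF⟩, hwz⟩
      have : w ∈ TF := (hTFmem w).mpr ⟨hwK, hwF⟩
      obtain ⟨i, hi, hieq⟩ := List.mem_iff_getElem.mp this
      exact ⟨i, hi, by rw [hu_eq i hi, hieq]; exact hwz⟩
    · rintro ⟨i, hi, hiz⟩
      exact ⟨u i, ⟨(huK i hi).1, (huK i hi).2⟩, hiz⟩
  have hfmem : ∀ i, i < n → (u i).f ∈ fwdUnion H K := by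
    intro i h
    rw [hfwdmem]
    exact ⟨i, h, by rw [hzone i h]; exact ⟨le_refl _, le_of_lt (hfs i h)⟩⟩
  -- the gap lemma
  have hGAP : ∀ i, i + 1 < n → ∃ j, j ≤ i ∧ (u (i + 1)).f < smax H (u j) := by
    intro i hi
    by_contra hcon
    push_neg at hcon
    have hstrict : ∀ j, j ≤ i → smax H (u j) < (u (i + 1)).f := by
      intro j hj
      refine lt_of_le_of_ne (hcon j hj) ?_
      have hjn : j < n := by omega
      obtain ⟨ρ, hρH, hρr, hρval, hρs⟩ :=
        exists_smax_read hWf (huH j hjn).1 (huH j hjn).2 (huK j hjn).2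
      intro heq
      have hρne : ρ ≠ u (i + 1) := by
        intro h
        have hw := (huH (i + 1) hi).2
        rw [Op.isWrite, ← h, hρr] at hw
        simp at hw
      have hsne := (hWf.2.1 ρ hρH (u (i + 1)) (huH (i + 1) hi).1 hρne).2.2
      rw [hρs] at hsne
      exact hsne heq
    have hrne : (Finset.range (i + 1)).Nonempty := Finset.nonempty_range_iff.mpr (by omega)
    set M := Finset.sup' (Finset.range (i + 1)) hrne (fun j => smax H (u j)) with hM
    have hMlt : M < (u (i + 1)).f := by
      obtain ⟨j0, hj0, hMeq⟩ := Finset.exists_mem_eq_sup' hrne (fun j => smax H (u j))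
      rw [hM, hMeq]
      exact hstrict j0 (Nat.lt_succ_iff.mp (Finset.mem_range.mp hj0))
    have hMge : ∀ j, j ≤ i → smax H (u j) ≤ M := by
      intro j hj
      exact Finset.le_sup' (fun j => smax H (u j)) (Finset.mem_range.mpr (by omega))
    have hM0 : (u 0).f < M := lt_of_lt_of_le (hfs 0 (by omega)) (hMge 0 (by omega))
    set t := (M + (u (i + 1)).f) / 2 with ht
    have ht1 : M < t := by rw [ht]; linarith
    have ht2 : t < (u (i + 1)).f := by rw [ht]; linarith
    have htU : t ∈ fwdUnion H K := by
      apply hfwdConn.out (hfmem 0 (by omega)) (hfmem (i + 1) hi)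
      constructor
      · linarith
      · linarith
    obtain ⟨j, hjn, hjz⟩ := (hfwdmem t).mp htU
    rw [hzone j hjn, Set.mem_Icc] at hjz
    rcases le_or_gt j i with hji | hji
    · have := hMge j hji
      linarith
    · have hf : (u (i + 1)).f ≤ (u j).f := hmonole (i + 1) j hji hjn
      linarith
  -- consequences of the gap lemma
  have hmeetpt : ∀ j k, j < k → k < n → (u k).f < smax H (u j) →
      (zone H (u j) ∩ zone H (u k)).Nonempty := by
    intro j k hjk hk hlt
    refine ⟨(u k).f, ?_, ?_⟩
    · rw [hzone j (by omega)]
      exact ⟨le_of_lt (hmono j k hjk hk), le_of_lt hlt⟩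
    · rw [hzone k hk]
      exact ⟨le_refl _, le_of_lt (hfs k hk)⟩
  have hB : 1 < n → (u 1).f < smax H (u 0) := by
    intro h1
    obtain ⟨j, hj, hjs⟩ := hGAP 0 h1
    have : j = 0 := by omega
    rwa [this] at hjs
  have hC : ∀ i, 2 ≤ i → i + 1 < n → (u (i + 1)).f < smax H (u i) := by
    intro i h2i hi1
    obtain ⟨j, hji, hjs⟩ := hGAP i hi1
    rcases Nat.eq_or_lt_of_le hji with hjeq | hjlt
    · rwa [hjeq] at hjs
    · exfalso
      have hflt : ∀ k, j < k → k ≤ i + 1 → (u k).f < smax H (u j) :=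
        fun k hjk hk => lt_of_le_of_lt (hmonole k (i + 1) hk hi1) hjs
      by_cases hj2 : j + 3 ≤ i + 1
      · refine hNoFour (u j) (huK j (by omega)).1 (huK j (by omega)).2
          ⟨u (j + 1), (huK (j + 1) (by omega)).1, u (j + 2), (huK (j + 2) (by omega)).1,
           u (j + 3), (huK (j + 3) (by omega)).1,
           hneq _ _ (by omega) (by omega) (by omega),
           hneq _ _ (by omega) (by omega) (by omega),
           hneq _ _ (by omega) (by omega) (by omega),
           hneq _ _ (by omega) (by omega) (by omega),
           hneq _ _ (by omega) (by omega) (by omega),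
           hneq _ _ (by omega) (by omega) (by omega),
           (huK (j + 1) (by omega)).2, (huK (j + 2) (by omega)).2, (huK (j + 3) (by omega)).2,
           hmeetpt j (j + 1) (by omega) (by omega) (hflt (j + 1) (by omega) (by omega)),
           hmeetpt j (j + 2) (by omega) (by omega) (hflt (j + 2) (by omega) (by omega)),
           hmeetpt j (j + 3) (by omega) (by omega) (hflt (j + 3) (by omega) (by omega))⟩
      · have hji1 : j = i - 1 := by omega
        obtain ⟨j', hj'le, hj's⟩ := hGAP (i - 2) (by omega)
        have hieq : i - 2 + 1 = i - 1 := by omega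
        rw [hieq] at hj's
        -- zone (u (i-1)) meets zone (u j'), zone (u i), zone (u (i+1))
        have hm1 : (zone H (u (i - 1)) ∩ zone H (u j')).Nonempty := by
          obtain ⟨x, hx1, hx2⟩ := hmeetpt j' (i - 1) (by omega) (by omega) hj's
          exact ⟨x, hx2, hx1⟩
        have hm2 : (zone H (u (i - 1)) ∩ zone H (u i)).Nonempty := by
          apply hmeetpt (i - 1) i (by omega) (by omega)
          rw [← hji1]
          exact lt_trans (hmono i (i + 1) (by omega) hi1) hjs
        have hm3 : (zone H (u (i - 1)) ∩ zone H (u (i + 1))).Nonempty := by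
          apply hmeetpt (i - 1) (i + 1) (by omega) (by omega)
          rw [← hji1]
          exact hjs
        refine hNoFour (u (i - 1)) (huK (i - 1) (by omega)).1 (huK (i - 1) (by omega)).2
          ⟨u j', (huK j' (by omega)).1, u i, (huK i (by omega)).1,
           u (i + 1), (huK (i + 1) (by omega)).1,
           hneq _ _ (by omega) (by omega) (by omega),
           hneq _ _ (by omega) (by omega) (by omega),
           hneq _ _ (by omega) (by omega) (by omega),
           hneq _ _ (by omega) (by omega) (by omega),
           hneq _ _ (by omega) (by omega) (by omega),
           hneq _ _ (by omega) (by omega) (by omega),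
           (huK j' (by omega)).2, (huK i (by omega)).2, (huK (i + 1) (by omega)).2,
           hm1, hm2, hm3⟩
  have hD : 2 < n → (u 2).f < smax H (u 1) ∨ (u 2).f < smax H (u 0) := by
    intro h2n
    obtain ⟨j, hj, hjs⟩ := hGAP 1 h2n
    interval_cases j
    · exact Or.inr hjs
    · exact Or.inl hjs
  -- the position function
  set p : ℕ → ℕ := fun i => T.idxOf (u i) with hp
  have hplt : ∀ i, i < n → p i < n := by
    intro i hi
    have h := List.idxOf_lt_length_iff.mpr (huT i hi)
    show T.idxOf (u i) < n
    omega
  have hTidx : ∀ i (hi : i < n), T[p i]'(by rw [hlenTT]; exact hplt i hi) = u i := by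
    intro i hi
    exact List.getElem_idxOf (List.idxOf_lt_length_iff.mpr (huT i hi))
  have hpinj : ∀ i, i < n → ∀ j, j < n → p i = p j → i = j := by
    intro i hi j hj hij
    by_contra hne
    apply hneq i j hi hj hne
    have e1 := hTidx i hi
    have e2 := hTidx j hj
    rw [← e1, ← e2]
    congr 1
  have hpsurj : ∀ v, v < n → ∃ i, i < n ∧ p i = v := by
    intro v hv
    have hvT : v < T.length := by omega
    have hxT : T[v] ∈ T := List.getElem_mem hvT
    have hxTF : T[v] ∈ TF := (hTFmem _).mpr ((hTmem _).mp hxT)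
    obtain ⟨i, hi, hieq⟩ := List.mem_iff_getElem.mp hxTF
    refine ⟨i, hi, ?_⟩
    show T.idxOf (u i) = v
    rw [hu_eq i hi, hieq]
    exact List.Nodup.idxOf_getElem hTnd v hvT
  -- constraints
  have hKops' : ∀ w ∈ K, w ∈ H ∧ w.isWrite := hKops
  have hkey : ∀ i j, i < n → j < n → i ≠ j → (u j).f < smax H (u i) →
      p j ≤ p i + 1 := by
    intro i j hi hj hij hlt
    exact key_lemma hWf hKops' hTnd hTmem hTviable (huT i hi) (huT j hj)
      (hneq i j hi hj hij) hlt
  have cA : ∀ j i, j < i → i < n → p j ≤ p i + 1 := by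
    intro j i hji hi
    exact hkey i j hi (by omega) (by omega)
      (lt_trans (hmono j i hji hi) (hfs i hi))
  have cB : 1 < n → p 1 ≤ p 0 + 1 := by
    intro h1
    exact hkey 0 1 (by omega) h1 (by omega) (hB h1)
  have cC : ∀ i, 2 ≤ i → i + 1 < n → p (i + 1) ≤ p i + 1 := by
    intro i h2 hi
    exact hkey i (i + 1) (by omega) hi (by omega) (hC i h2 hi)
  have cD : 2 < n → p 2 ≤ p 1 + 1 ∨ p 2 ≤ p 0 + 1 := by
    intro h2
    rcases hD h2 with h | h
    · exact Or.inl (hkey 1 2 (by omega) h2 (by omega) h)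
    · exact Or.inr (hkey 0 2 (by omega) h2 (by omega) h)
  rcases perm_arith n p hpinj hpsurj cA cB cC cD with hall | ⟨hn1, e0, e1, hrest⟩
  · left
    apply List.ext_getElem (by omega)
    intro k h1 h2
    have hkn : k < n := h2
    have e := hTidx k hkn
    have hpk : p k = k := hall k hkn
    rw [← hu_eq k hkn]
    rw [← e]
    congr 1
    omega
  · right
    have h2n : 2 ≤ TF.length := by omega
    have hTFne : TF ≠ [] := by
      intro h; rw [h] at h2n; simp at h2n
    obtain ⟨a, ta, hTF1⟩ := List.exists_cons_of_ne_nil hTFne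
    have htane : ta ≠ [] := by
      intro h; rw [h] at hTF1; rw [hTF1] at h2n; simp at h2n
    obtain ⟨b, t, hTF2⟩ := List.exists_cons_of_ne_nil htane
    have hTF : TF = a :: b :: t := by rw [hTF1, hTF2]
    have hntl : n = t.length + 2 := by rw [hn, hTF]; simp
    rw [hTF]
    show T = b :: a :: t
    apply List.ext_getElem (by simp only [List.length_cons]; omega)
    intro k h1 h2
    have hu0 : u 0 = a := by show TF.getD 0 dOp = a; rw [hTF]; rfl
    have hu1 : u 1 = b := by show TF.getD 1 dOp = b; rw [hTF]; rfl
    rcases k with _ | k1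
    · -- k = 0 : T[0] = b
      have ep := hTidx 1 (by omega)
      have hTeq : T[0]'h1 = u 1 := by
        rw [← ep]
        congr 1
        omega
      rw [hTeq, hu1]
      rfl
    · rcases k1 with _ | m
      · -- k = 1 : T[1] = a
        have ep := hTidx 0 (by omega)
        have hTeq : T[1]'h1 = u 0 := by
          rw [← ep]
          congr 1
          omega
        rw [hTeq, hu0]
        rfl
      · -- k = m + 2
        have hmt : m < t.length := by
          simp only [List.length_cons] at h2
          omega
        have hkn : m + 2 < n := by omega
        have hpk : p (m + 2) = m + 2 := hrest (m + 2) (by omega) hkn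
        have hTeq : T[m + 2]'h1 = u (m + 2) := by
          rw [← hTidx (m + 2) hkn]
          congr 1
          omega
        have huk : u (m + 2) = t[m] := by
          show TF.getD (m + 2) dOp = t[m]
          rw [hTF]
          have h' : (a :: b :: t).getD (m + 2) dOp = t.getD m dOp := rfl
          rw [h']
          exact List.getD_eq_getElem t dOp hmt
        rw [hTeq, huk]
        simp only [List.getElem_cons_succ]
end

section
/- If a maximal chunk K of a history H contains three or more backward clusters, then there is no viable total order over all the dictating writes of K; consequently H|K is not 2-atomic. -/
open scoped Classical

/-! ### Auxiliary machinery for the proof -/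

/-- Number of writes in a list. -/
def countW (l : List Op) : ℕ := (l.filter (fun op => op.isRead = false)).length

lemma countW_append (l1 l2 : List Op) : countW (l1 ++ l2) = countW l1 + countW l2 := by
  simp [countW, List.filter_append]

lemma countW_write {x : Op} (hx : x.isRead = false) : countW [x] = 1 := by
  simp [countW, hx]

lemma countW_read {x : Op} (hx : x.isRead = true) : countW [x] = 0 := by
  simp [countW, hx]

/-- Number of writes up to and including `o` in `l`. -/
noncomputable def iota (l : List Op) (o : Op) : ℕ :=
  countW (l.takeWhile (fun x => x ≠ o)) + countW [o]

lemma takeWhile_split (x : Op) (l1 l2 : List Op) (hx : x ∉ l1) :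
    (l1 ++ x :: l2).takeWhile (fun y => y ≠ x) = l1 := by
  induction l1 with
  | nil => simp
  | cons a t ih =>
    have ha : a ≠ x := fun h => hx (h ▸ (List.mem_cons_self : a ∈ a :: t))
    have ht : x ∉ t := fun h => hx (List.mem_cons_of_mem _ h)
    simpa [List.takeWhile_cons, ha] using ih ht

lemma iota_of_split {l l1 l2 : List Op} {x : Op} (hnd : l.Nodup)
    (h : l = l1 ++ x :: l2) : iota l x = countW l1 + countW [x] := by
  have hx : x ∉ l1 := by
    subst h
    have := List.disjoint_of_nodup_append hnd
    exact fun hm => this hm (List.mem_cons_self : x ∈ x :: l2)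
  subst h
  unfold iota
  rw [takeWhile_split x l1 l2 hx]

lemma before_total {l : List Op} {a b : Op} (ha : a ∈ l) (hb : b ∈ l) (hne : a ≠ b) :
    Before l a b ∨ Before l b a := by
  obtain ⟨s, t, hl⟩ := List.append_of_mem ha
  subst hl
  rcases List.mem_append.mp hb with hb | hb
  · obtain ⟨s1, t1, hs⟩ := List.append_of_mem hb
    subst hs
    exact Or.inr ⟨s1, t1, t, by simp⟩
  · rcases List.mem_cons.mp hb with h | hb
    · exact absurd h.symm hne
    · obtain ⟨s2, t2, ht⟩ := List.append_of_mem hb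
      subst ht
      exact Or.inl ⟨s, s2, t2, by simp⟩

lemma before_iota {l : List Op} {a b : Op} (hnd : l.Nodup) (h : Before l a b) :
    iota l a + countW [b] ≤ iota l b := by
  obtain ⟨l1, l2, l3, hl⟩ := h
  have h1 : iota l a = countW l1 + countW [a] :=
    iota_of_split (l2 := l2 ++ b :: l3) hnd (by rw [hl]; simp)
  have h2 : iota l b = countW (l1 ++ a :: l2) + countW [b] :=
    iota_of_split hnd hl
  have h3 : countW (l1 ++ a :: l2) = countW l1 + countW [a] + countW l2 := by
    have : l1 ++ a :: l2 = (l1 ++ [a]) ++ l2 := by simp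
    rw [this, countW_append, countW_append]
  omega

lemma ka_window {l : List Op} {r w : Op} (hnd : l.Nodup) (hka : KAtomicOrder 2 l)
    (hr : r ∈ l) (hread : r.isRead = true) (hw : w ∈ l) (hwr : w.isWrite)
    (hval : w.val = r.val) : iota l w ≤ iota l r ∧ iota l r ≤ iota l w + 1 := by
  obtain ⟨l1, l2, l3, hdec, hlen⟩ := hka r hr hread w hw hwr hval
  have h1 : iota l w = countW l1 + countW [w] :=
    iota_of_split (l2 := l2 ++ r :: l3) hnd (by rw [hdec]; simp)
  have h2 : iota l r = countW (l1 ++ w :: l2) + countW [r] :=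
    iota_of_split hnd hdec
  have h3 : countW (l1 ++ w :: l2) = countW l1 + countW [w] + countW l2 := by
    have : l1 ++ w :: l2 = (l1 ++ [w]) ++ l2 := by simp
    rw [this, countW_append, countW_append]
  have hr0 : countW [r] = 0 := countW_read hread
  have hlen' : countW l2 ≤ 1 := hlen
  omega

lemma no_gap {SA SB U : Set ℝ} (hA : IsClosed SA) (hB : IsClosed SB)
    (hUeq : SA ∪ SB = U) (hUoc : U.OrdConnected)
    (hd : ∀ t, t ∈ SA → t ∈ SB → False)
    {p q : ℝ} (hp : p ∈ SA) (hq : q ∈ SB) (hpq : p < q) : False := by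
  have hIcc : Set.Icc p q ⊆ SA ∪ SB := by
    rw [hUeq]
    exact hUoc.out (hUeq ▸ (Or.inl hp)) (hUeq ▸ (Or.inr hq))
  set S1 := SA ∩ Set.Icc p q with hS1
  have hS1ne : S1.Nonempty := ⟨p, hp, le_rfl, le_of_lt hpq⟩
  have hS1bdd : BddAbove S1 := ⟨q, fun x hx => hx.2.2⟩
  have hc := (hA.inter isClosed_Icc).csSup_mem hS1ne hS1bdd
  set c := sSup S1 with hcdef
  have hcq : c < q := lt_of_le_of_ne hc.2.2 (fun h => hd q (h ▸ hc.1) hq)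
  set S2 := SB ∩ Set.Icc c q with hS2
  have hS2ne : S2.Nonempty := ⟨q, hq, le_of_lt hcq, le_rfl⟩
  have hS2bdd : BddBelow S2 := ⟨c, fun x hx => hx.2.1⟩
  have hd2 := (hB.inter isClosed_Icc).csInf_mem hS2ne hS2bdd
  set d := sInf S2 with hddef
  have hcd : c < d := lt_of_le_of_ne hd2.2.1 (fun h => hd c hc.1 (h ▸ hd2.1))
  set e := (c + d) / 2 with hedef
  have hce : c < e := by rw [hedef]; linarith
  have hed : e < d := by rw [hedef]; linarith
  have heIcc : e ∈ Set.Icc p q :=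
    ⟨le_trans hc.2.1 (le_of_lt hce), le_trans (le_of_lt hed) hd2.2.2⟩
  rcases hIcc heIcc with he | he
  · have : e ≤ c := le_csSup hS1bdd ⟨he, heIcc⟩
    linarith
  · have : d ≤ e := csInf_le hS2bdd ⟨he, le_of_lt hce, heIcc.2⟩
    linarith

lemma exists_fmin (H : History) (c : Op) : ∃ y ∈ cluster H c, y.f = fmin H c := by
  obtain ⟨y, hy, h⟩ := Finset.exists_mem_eq_inf' (Finset.insert_nonempty _ _) Op.f
  exact ⟨y, hy, h.symm⟩

lemma exists_smax (H : History) (c : Op) : ∃ x ∈ cluster H c, x.s = smax H c := by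
  obtain ⟨x, hx, h⟩ := Finset.exists_mem_eq_sup' (Finset.insert_nonempty _ _) Op.s
  exact ⟨x, hx, h.symm⟩

lemma zone_fwd {H : History} {v : Op} (hv : ForwardZone H v) :
    zone H v = Set.Icc (fmin H v) (smax H v) := by
  unfold zone zoneL zoneH
  rw [min_eq_left (le_of_lt hv), max_eq_right (le_of_lt hv)]

lemma zone_bwd {H : History} {b : Op} (hb : ¬ ForwardZone H b) :
    zone H b = Set.Icc (smax H b) (fmin H b) := by
  have h : smax H b ≤ fmin H b := not_lt.mp hb
  unfold zone zoneL zoneH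
  rw [min_eq_right h, max_eq_left h]

/-- The core impossibility: no valid 2-atomic linearization of `H|K` exists when the
chunk `K` has at least three backward clusters. -/
theorem core_impossible (H : History) (hWf : Wf H) (K : Finset Op) (hCh : IsChunk H K)
    (h3 : 3 ≤ (K.filter (fun w => ¬ ForwardZone H w)).card)
    (l : List Op) (hnd : l.Nodup) (hmem : ∀ op, op ∈ l ↔ op ∈ proj H K)
    (hval : Valid l) (hka : KAtomicOrder 2 l) : False := by
  obtain ⟨hDur, hDistinct, hWVal, hDict⟩ := hWf
  obtain ⟨hKH, hFne, hFoc, hBF⟩ := hCh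
  -- basic cluster facts
  have hclmem : ∀ c ∈ K, ∀ o ∈ cluster H c,
      o ∈ H ∧ (o = c ∨ (o.isRead = true ∧ o.val = c.val)) := by
    intro c hc o ho
    rcases Finset.mem_insert.mp ho with h | ho
    · exact ⟨h ▸ (hKH c hc).1, Or.inl h⟩
    · have := Finset.mem_filter.mp ho
      exact ⟨this.1, Or.inr this.2⟩
  have hcl_l : ∀ c ∈ K, ∀ o ∈ cluster H c, o ∈ l := by
    intro c hc o ho
    rw [hmem]
    unfold proj
    rw [Finset.mem_filter]
    exact ⟨(hclmem c hc o ho).1, ⟨c, hc, ho⟩⟩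
  have hdisj : ∀ c ∈ K, ∀ c' ∈ K, c ≠ c' → ∀ o, o ∈ cluster H c → o ∈ cluster H c' → False := by
    intro c hc c' hc' hne o ho ho'
    have hcw : c.isRead = false := (hKH c hc).2
    have hc'w : c'.isRead = false := (hKH c' hc').2
    rcases (hclmem c hc o ho).2 with h1 | ⟨hr1, hv1⟩ <;>
      rcases (hclmem c' hc' o ho').2 with h2 | ⟨hr2, hv2⟩
    · exact hne (h1 ▸ h2)
    · rw [h1] at hr2; rw [hcw] at hr2; exact Bool.noConfusion hr2
    · rw [h2] at hr1; rw [hc'w] at hr1; exact Bool.noConfusion hr1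
    · exact hne (hWVal c (hKH c hc).1 c' (hKH c' hc').1 hcw hc'w (hv1 ▸ hv2 ▸ rfl))
  have hwindow : ∀ c ∈ K, ∀ o ∈ cluster H c, iota l c ≤ iota l o ∧ iota l o ≤ iota l c + 1 := by
    intro c hc o ho
    rcases (hclmem c hc o ho).2 with h | ⟨hr, hv⟩
    · rw [h]
      exact ⟨le_rfl, Nat.le_succ _⟩
    · exact ka_window hnd hka (hcl_l c hc o ho) hr
        (hcl_l c hc c (Finset.mem_insert_self _ _)) (hKH c hc).2 hv.symm
  -- the key order lemma
  have hkey : ∀ c ∈ K, ∀ c' ∈ K, c ≠ c' → fmin H c ≤ smax H c' →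
      iota l c ≤ iota l c' + 1 := by
    intro c hc c' hc' hne hle
    obtain ⟨y, hy, hyf⟩ := exists_fmin H c
    obtain ⟨x, hx, hxs⟩ := exists_smax H c'
    have hyx : y ≠ x := fun h => hdisj c hc c' hc' hne y hy (h ▸ hx)
    have hyH := (hclmem c hc y hy).1
    have hxH := (hclmem c' hc' x hx).1
    have hsne : x.s ≠ y.f := (hDistinct x hxH y hyH (Ne.symm hyx)).2.2
    have hle' : y.f ≤ x.s := by rw [hyf, hxs]; exact hle
    have hlt : y.f < x.s := lt_of_le_of_ne hle' (Ne.symm hsne)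
    have hb : Before l y x := hval y (hcl_l c hc y hy) x (hcl_l c' hc' x hx) hlt
    have h0 := before_iota hnd hb
    have h1 := (hwindow c hc y hy).1
    have h2 := (hwindow c' hc' x hx).2
    omega
  have hinj : ∀ c ∈ K, ∀ c' ∈ K, c ≠ c' → iota l c ≠ iota l c' := by
    intro c hc c' hc' hne
    have hcl : c ∈ l := hcl_l c hc c (Finset.mem_insert_self _ _)
    have hc'l : c' ∈ l := hcl_l c' hc' c' (Finset.mem_insert_self _ _)
    have hw1 : countW [c] = 1 := countW_write (hKH c hc).2
    have hw2 : countW [c'] = 1 := countW_write (hKH c' hc').2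
    rcases before_total hcl hc'l hne with h | h
    · have := before_iota hnd h
      omega
    · have := before_iota hnd h
      omega
  -- the forward clusters
  set W : Op → ℕ := iota l with hWdef
  have hmemF : ∀ {t : ℝ}, t ∈ fwdUnion H K ↔
      ∃ v, (v ∈ K ∧ ForwardZone H v) ∧ t ∈ zone H v := by
    intro t
    simp [fwdUnion, Set.mem_iUnion]
  obtain ⟨t0, ht0⟩ := hFne
  obtain ⟨v0, ⟨hv0K, hv0F⟩, _⟩ := hmemF.mp ht0
  set Fwd := K.filter (fun w => ForwardZone H w) with hFwddef
  have hFwdne : Fwd.Nonempty := ⟨v0, Finset.mem_filter.mpr ⟨hv0K, hv0F⟩⟩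
  set Nimg := Fwd.image W with hNimgdef
  have hNne : Nimg.Nonempty := hFwdne.image W
  set a := Nimg.min' hNne with hadef
  set A := Nimg.max' hNne with hAdef
  -- consecutiveness of forward positions
  have hcons : ∀ g, a ≤ g → g ≤ A → g ∈ Nimg := by
    intro g hag hgA
    by_contra hg
    have hne_g : ∀ v ∈ Fwd, W v ≠ g := fun v hv h => hg (Finset.mem_image.mpr ⟨v, hv, h⟩)
    set SA : Set ℝ := ⋃ v ∈ Fwd.filter (fun v => W v < g), zone H v with hSAdef
    set SB : Set ℝ := ⋃ v ∈ Fwd.filter (fun v => g < W v), zone H v with hSBdef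
    have hAcl : IsClosed SA := by
      rw [hSAdef]
      exact isClosed_biUnion_finset (fun i _ => isClosed_Icc)
    have hBcl : IsClosed SB := by
      rw [hSBdef]
      exact isClosed_biUnion_finset (fun i _ => isClosed_Icc)
    have hUeq : SA ∪ SB = fwdUnion H K := by
      apply Set.Subset.antisymm
      · rintro t (ht | ht)
        · obtain ⟨v, hv, htv⟩ := Set.mem_iUnion₂.mp ht
          have hvF := Finset.mem_filter.mp ((Finset.mem_filter.mp hv).1)
          exact hmemF.mpr ⟨v, ⟨hvF.1, hvF.2⟩, htv⟩
        · obtain ⟨v, hv, htv⟩ := Set.mem_iUnion₂.mp ht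
          have hvF := Finset.mem_filter.mp ((Finset.mem_filter.mp hv).1)
          exact hmemF.mpr ⟨v, ⟨hvF.1, hvF.2⟩, htv⟩
      · intro t ht
        obtain ⟨v, ⟨hvK, hvF⟩, htv⟩ := hmemF.mp ht
        have hvFwd : v ∈ Fwd := Finset.mem_filter.mpr ⟨hvK, hvF⟩
        rcases lt_or_gt_of_ne (hne_g v hvFwd) with h | h
        · exact Or.inl (Set.mem_iUnion₂.mpr ⟨v, Finset.mem_filter.mpr ⟨hvFwd, h⟩, htv⟩)
        · exact Or.inr (Set.mem_iUnion₂.mpr ⟨v, Finset.mem_filter.mpr ⟨hvFwd, h⟩, htv⟩)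
    have hABdisj : ∀ t, t ∈ SA → t ∈ SB → False := by
      intro t htA htB
      obtain ⟨v, hv, htv⟩ := Set.mem_iUnion₂.mp htA
      obtain ⟨v', hv', htv'⟩ := Set.mem_iUnion₂.mp htB
      obtain ⟨hvFwd, hvlt⟩ := Finset.mem_filter.mp hv
      obtain ⟨hv'Fwd, hv'gt⟩ := Finset.mem_filter.mp hv'
      obtain ⟨hvK, hvF⟩ := Finset.mem_filter.mp hvFwd
      obtain ⟨hv'K, hv'F⟩ := Finset.mem_filter.mp hv'Fwd
      rw [zone_fwd hvF] at htv
      rw [zone_fwd hv'F] at htv'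
      have hle : fmin H v' ≤ smax H v := le_trans htv'.1 htv.2
      have hvne : v' ≠ v := fun h => by rw [h] at hv'gt; omega
      have := hkey v' hv'K v hvK hvne hle
      omega
    -- pick points on both sides
    obtain ⟨va, hvaFwd, hWva⟩ := Finset.mem_image.mp (Finset.min'_mem Nimg hNne)
    obtain ⟨vb, hvbFwd, hWvb⟩ := Finset.mem_image.mp (Finset.max'_mem Nimg hNne)
    have hvaF : ForwardZone H va := (Finset.mem_filter.mp hvaFwd).2
    have hvbF : ForwardZone H vb := (Finset.mem_filter.mp hvbFwd).2
    have hvalt : W va < g := lt_of_le_of_ne (hWva ▸ hag) (hne_g va hvaFwd)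
    have hvbgt : g < W vb := lt_of_le_of_ne (hWvb ▸ hgA) (fun h => hne_g vb hvbFwd h.symm)
    have hpA : fmin H va ∈ SA := Set.mem_iUnion₂.mpr
      ⟨va, Finset.mem_filter.mpr ⟨hvaFwd, hvalt⟩,
        by rw [zone_fwd hvaF]; exact ⟨le_rfl, le_of_lt hvaF⟩⟩
    have hqB : fmin H vb ∈ SB := Set.mem_iUnion₂.mpr
      ⟨vb, Finset.mem_filter.mpr ⟨hvbFwd, hvbgt⟩,
        by rw [zone_fwd hvbF]; exact ⟨le_rfl, le_of_lt hvbF⟩⟩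
    set p := fmin H va
    set q := fmin H vb
    have hpq : p ≠ q := fun h => hABdisj q (h ▸ hpA) hqB
    rcases lt_or_gt_of_ne hpq with h | h
    · exact no_gap hAcl hBcl hUeq hFoc hABdisj hpA hqB h
    · exact no_gap hBcl hAcl (Set.union_comm SA SB ▸ hUeq) hFoc
        (fun t htB htA => hABdisj t htA htB) hqB hpA h
  -- backward clusters sit just outside the forward block
  have hbwd : ∀ b ∈ K, ¬ ForwardZone H b → (W b + 1 = a ∨ W b = A + 1) := by
    intro b hbK hbB
    have hbmemz : ∀ t ∈ zone H b, t ∈ fwdUnion H K := by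
      intro t ht
      apply hBF
      exact Set.mem_iUnion₂.mpr ⟨b, ⟨hbK, hbB⟩, ht⟩
    have hble : smax H b ≤ fmin H b := not_lt.mp hbB
    have hsm : smax H b ∈ fwdUnion H K := hbmemz _ (by rw [zone_bwd hbB]; exact ⟨le_rfl, hble⟩)
    have hfm : fmin H b ∈ fwdUnion H K := hbmemz _ (by rw [zone_bwd hbB]; exact ⟨hble, le_rfl⟩)
    obtain ⟨v, ⟨hvK, hvF⟩, htv⟩ := hmemF.mp hsm
    rw [zone_fwd hvF] at htv
    have h1 : W v ≤ W b + 1 := hkey v hvK b hbK (fun h => hbB (by rw [← h]; exact hvF)) htv.1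
    have ha1 : a ≤ W v := Finset.min'_le _ _
      (Finset.mem_image.mpr ⟨v, Finset.mem_filter.mpr ⟨hvK, hvF⟩, rfl⟩)
    obtain ⟨u, ⟨huK, huF⟩, htu⟩ := hmemF.mp hfm
    rw [zone_fwd huF] at htu
    have h2 : W b ≤ W u + 1 := hkey b hbK u huK (fun h => hbB (by rw [h]; exact huF)) htu.2
    have hA2 : W u ≤ A := Finset.le_max' _ _
      (Finset.mem_image.mpr ⟨u, Finset.mem_filter.mpr ⟨huK, huF⟩, rfl⟩)
    have hnot : ¬ (a ≤ W b ∧ W b ≤ A) := by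
      rintro ⟨h3', h4'⟩
      obtain ⟨v', hv', hWv'⟩ := Finset.mem_image.mp (hcons (W b) h3' h4')
      have hv'K := (Finset.mem_filter.mp hv').1
      have hv'F := (Finset.mem_filter.mp hv').2
      exact hinj b hbK v' hv'K (fun h => hbB (by rw [h]; exact hv'F)) hWv'.symm
    omega
  -- pigeonhole among backward clusters
  set Bwd := K.filter (fun w => ¬ ForwardZone H w) with hBwddef
  have himg : Bwd.image W ⊆ {a - 1, A + 1} := by
    intro x hx
    obtain ⟨b, hb, hWb⟩ := Finset.mem_image.mp hx
    obtain ⟨hbK, hbB⟩ := Finset.mem_filter.mp hb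
    rcases hbwd b hbK hbB with h | h <;>
      · rw [Finset.mem_insert, Finset.mem_singleton]
        omega
  have hinjB : Set.InjOn W ↑Bwd := by
    intro x hx y hy hxy
    by_contra hne
    exact hinj x (Finset.mem_filter.mp (Finset.mem_coe.mp hx)).1
      y (Finset.mem_filter.mp (Finset.mem_coe.mp hy)).1 hne hxy
  have hcard : Bwd.card ≤ 2 := by
    rw [← Finset.card_image_of_injOn hinjB]
    calc (Bwd.image W).card ≤ ({a - 1, A + 1} : Finset ℕ).card := Finset.card_le_card himg
    _ ≤ 2 := by
      apply le_trans (Finset.card_insert_le _ _)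
      simp
  omega

/-- If a maximal chunk `K` contains three or more backward clusters, then there is
no viable total order over all the dictating writes of `K`, and consequently the
projection `H|K` is not 2-atomic. -/
theorem stmt_6 (H : History) (hWf : Wf H) (K : Finset Op) (hK : MaximalChunk H K)
    (h3 : 3 ≤ (K.filter (fun w => ¬ ForwardZone H w)).card) :
    (∀ T : List Op, TotalOrderOn K T → ¬ Viable H T) ∧ ¬ KAtomic 2 (proj H K) := by
  have hCh : IsChunk H K := hK.1
  constructor
  · rintro T ⟨hTnd, hTK, hTval⟩ ⟨T', hnd, hmem', hvalid, hfilter, hka⟩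
    apply core_impossible H hWf K hCh h3 T' hnd ?_ hvalid hka
    intro op
    rw [hmem']
    unfold proj
    rw [Finset.mem_filter]
    constructor
    · rintro (hT | ⟨hH, hr, w, hwT, hvaleq⟩)
      · have hKop := (hTK op).mp hT
        exact ⟨(hCh.1 op hKop).1, ⟨op, hKop, Finset.mem_insert_self _ _⟩⟩
      · have hwK := (hTK w).mp hwT
        exact ⟨hH, ⟨w, hwK,
          Finset.mem_insert.mpr (Or.inr (Finset.mem_filter.mpr ⟨hH, hr, hvaleq.symm⟩))⟩⟩
    · rintro ⟨hH, w, hwK, hcl⟩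
      rcases Finset.mem_insert.mp hcl with heq | hcl
      · exact Or.inl ((hTK op).mpr (heq ▸ hwK))
      · obtain ⟨_, hr, hv⟩ := Finset.mem_filter.mp hcl
        exact Or.inr ⟨hH, hr, w, (hTK w).mpr hwK, hv.symm⟩
  · rintro ⟨l, ⟨hnd, hmem⟩, hvalid, hka⟩
    exact core_impossible H hWf K hCh h3 l hnd hmem hvalid hka
end
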